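/- For m ∈ ℕ⁺ set θ_m = π/2^m, R_m = 1 − 2^{−(m+1)}, z_m = e^{iθ_m}, and A_m = { r e^{iθ} : r ∈ (R_m, 1], θ ∈ (θ_{m+1}, θ_m) }. Then A_m ⊂ ℍ and for every ω ∈ A_m one has h_ℍ(ω, z_m) ≤ (√2/2)·π. -/

import Mathlib

open Complex Metric Set Real

/-- The hyperbolic (Poincaré) distance of the upper half-plane `ℍ = {z : Im z > 0}`,
given by the length metric with density `|dz| / Im z`. -/
noncomputable def hUHP (z w : ℂ) : ℝ :=
  2 * Real.arsinh (‖z - w‖ / (2 * Real.sqrt (z.im * w.im)))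

/-- `θ_m = π / 2^m`. -/
noncomputable def θm (m : ℕ) : ℝ := π / 2 ^ m

/-- `R_m = 1 - 2^{-(m+1)}`. -/
noncomputable def Rm (m : ℕ) : ℝ := 1 - 1 / 2 ^ (m + 1)

/-- `z_m = e^{iθ_m}`. -/
noncomputable def zm (m : ℕ) : ℂ := Complex.exp (θm m * Complex.I)

/-- `A_m = { r e^{iθ} : r ∈ (R_m, 1], θ ∈ (θ_{m+1}, θ_m) }`. -/
noncomputable def Am (m : ℕ) : Set ℂ :=
  {z : ℂ | ∃ r θ : ℝ, r ∈ Set.Ioc (Rm m) 1 ∧ θ ∈ Set.Ioo (θm (m + 1)) (θm m) ∧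
    z = r * Complex.exp (θ * Complex.I)}

/-- The map `t ↦ e^{it}` is 1-Lipschitz. -/
lemma aux_exp_lip (a b : ℝ) :
    ‖Complex.exp (a * Complex.I) - Complex.exp (b * Complex.I)‖ ≤ |a - b| := by
  have h : Complex.exp (a * Complex.I) - Complex.exp (b * Complex.I)
      = Complex.exp (b * Complex.I) * (Complex.exp (((a - b : ℝ) : ℂ) * Complex.I) - 1) := by
    rw [mul_sub, ← Complex.exp_add, mul_one]
    push_cast
    ring_nf
  rw [h, norm_mul, Complex.norm_exp_ofReal_mul_I, one_mul]
  set s := a - b with hs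
  clear_value s
  have hre : (Complex.exp ((s : ℂ) * Complex.I) - 1).re = Real.cos s - 1 := by
    simp [Complex.exp_ofReal_mul_I_re]
  have him : (Complex.exp ((s : ℂ) * Complex.I) - 1).im = Real.sin s := by
    simp [Complex.exp_ofReal_mul_I_im]
  have hsq : (‖Complex.exp ((s : ℂ) * Complex.I) - 1‖) ^ 2 ≤ s ^ 2 := by
    rw [Complex.sq_norm, Complex.normSq_apply, hre, him]
    nlinarith [Real.sin_sq_add_cos_sq s, Real.one_sub_sq_div_two_le_cos (x := s)]
  have h2 := Real.sqrt_le_sqrt hsq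
  rwa [Real.sqrt_sq (norm_nonneg _), Real.sqrt_sq_eq_abs] at h2

/-- `arsinh x ≤ x` for nonnegative `x`. -/
lemma aux_arsinh_le_self {x : ℝ} (hx : 0 ≤ x) : Real.arsinh x ≤ x := by
  rw [← Real.sinh_le_sinh, Real.sinh_arsinh]
  exact Real.self_le_sinh_iff.mpr hx

set_option maxHeartbeats 800000 in
/-- `A_m ⊂ ℍ` and every `ω ∈ A_m` satisfies `h_ℍ(ω, z_m) ≤ (√2/2)·π`. -/
theorem hyperbolic_distance_to_zm_bounded (m : ℕ) (hm : 0 < m) :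
    (∀ ω ∈ Am m, 0 < ω.im) ∧
    ∀ ω ∈ Am m, hUHP ω (zm m) ≤ (Real.sqrt 2 / 2) * π := by
  have hπ := Real.pi_pos
  have h2m : (2 : ℝ) ≤ 2 ^ m := by
    calc (2 : ℝ) = 2 ^ 1 := (pow_one 2).symm
    _ ≤ 2 ^ m := pow_le_pow_right₀ one_le_two hm
  set t : ℝ := 1 / 2 ^ m with ht_def
  have ht0 : 0 < t := by positivity
  have ht2 : t ≤ 1 / 2 := by
    rw [ht_def, div_le_div_iff₀ (by positivity) (by norm_num)]
    linarith
  have hθm : θm m = π * t := by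
    rw [θm, ht_def]; ring
  have hθm1 : θm (m + 1) = π * t / 2 := by
    rw [θm, ht_def, pow_succ]; ring
  have hRm : Rm m = 1 - t / 2 := by
    rw [Rm, ht_def, pow_succ]; ring
  have hθm_le : θm m ≤ π / 2 := by
    rw [hθm]
    nlinarith
  -- generic setup for ω ∈ Am m
  have key : ∀ ω ∈ Am m, 0 < ω.im ∧
      hUHP ω (zm m) ≤ (Real.sqrt 2 / 2) * π := by
    rintro ω ⟨r, θ, ⟨hr1, hr2⟩, ⟨hθ1, hθ2⟩, hω⟩
    have hθpos : 0 < θ := lt_trans (by rw [hθm1]; positivity) hθ1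
    have hθlt : θ < π / 2 := lt_of_lt_of_le hθ2 hθm_le
    have hsinθ : 0 < Real.sin θ :=
      Real.sin_pos_of_pos_of_lt_pi hθpos (by linarith)
    have hrpos : 0 < r := by rw [hRm] at hr1; linarith
    have hωim : ω.im = r * Real.sin θ := by
      rw [hω]
      simp [Complex.mul_im, Complex.exp_ofReal_mul_I_im, Complex.exp_ofReal_mul_I_re]
    have hωim_pos : 0 < ω.im := by rw [hωim]; positivity
    refine ⟨hωim_pos, ?_⟩
    -- imaginary part of zm
    have hzim : (zm m).im = Real.sin (θm m) := by
      rw [zm]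
      simp [Complex.exp_ofReal_mul_I_im]
    -- lower bounds on imaginary parts
    have hsinθ_lb : t ≤ Real.sin θ := by
      have h1 : 2 / π * θ ≤ Real.sin θ := Real.mul_le_sin hθpos.le hθlt.le
      have h2 : t ≤ 2 / π * θ := by
        have : π * t / 2 ≤ θ := le_of_lt (hθm1 ▸ hθ1)
        rw [div_mul_eq_mul_div, le_div_iff₀ hπ]
        nlinarith
      linarith
    have hsinθm_lb : 2 * t ≤ Real.sin (θm m) := by
      have h1 : 2 / π * θm m ≤ Real.sin (θm m) :=
        Real.mul_le_sin (by rw [hθm]; positivity) hθm_le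
      have h2 : 2 / π * θm m = 2 * t := by
        rw [hθm]; field_simp
      linarith [h2 ▸ h1]
    have hr34 : 3 / 4 ≤ r := by
      rw [hRm] at hr1; linarith
    -- lower bound on the denominator
    have hP : (3 / 2) * t ^ 2 ≤ ω.im * (zm m).im := by
      rw [hωim, hzim]
      have h1 : t * (2 * t) ≤ Real.sin θ * Real.sin (θm m) :=
        mul_le_mul hsinθ_lb hsinθm_lb (by positivity) hsinθ.le
      nlinarith [mul_le_mul hr34 h1 (by positivity) (by linarith)]
    have hsqrt32 : ((6/5 : ℝ) : ℝ) ≤ Real.sqrt (3 / 2) := by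
      rw [show ((6/5 : ℝ) : ℝ) = Real.sqrt ((6/5 : ℝ) ^ 2) by
        rw [Real.sqrt_sq]; norm_num]
      exact Real.sqrt_le_sqrt (by norm_num)
    have hsqrtP : (6/5 : ℝ) * t ≤ Real.sqrt (ω.im * (zm m).im) := by
      have h1 : Real.sqrt ((3 / 2) * t ^ 2) ≤ Real.sqrt (ω.im * (zm m).im) :=
        Real.sqrt_le_sqrt hP
      have h2 : Real.sqrt ((3 / 2) * t ^ 2) = Real.sqrt (3 / 2) * t := by
        rw [Real.sqrt_mul (by norm_num), Real.sqrt_sq ht0.le]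
      nlinarith
    -- upper bound on the numerator
    have hN : ‖ω - zm m‖ ≤ (1 + π) * t / 2 := by
      have h1 : ω - zm m = ((r : ℂ) - 1) * Complex.exp ((θ : ℂ) * Complex.I)
          + (Complex.exp ((θ : ℂ) * Complex.I)
            - Complex.exp (((θm m : ℝ) : ℂ) * Complex.I)) := by
        rw [hω, zm]; ring
      have h2 : ‖((r : ℂ) - 1) * Complex.exp ((θ : ℂ) * Complex.I)‖
          ≤ t / 2 := by
        rw [norm_mul, Complex.norm_exp_ofReal_mul_I, mul_one]
        rw [show ((r : ℂ) - 1) = ((r - 1 : ℝ) : ℂ) by push_cast; ring,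
          Complex.norm_real, Real.norm_eq_abs, abs_of_nonpos (by linarith)]
        rw [hRm] at hr1; linarith
      have h3 : ‖Complex.exp ((θ : ℂ) * Complex.I)
          - Complex.exp (((θm m : ℝ) : ℂ) * Complex.I)‖ ≤ π * t / 2 := by
        refine le_trans (aux_exp_lip θ (θm m)) ?_
        rw [abs_of_nonpos (by linarith)]
        have := hθm1 ▸ hθ1
        rw [hθm]
        linarith
      calc ‖ω - zm m‖
          ≤ ‖((r : ℂ) - 1) * Complex.exp ((θ : ℂ) * Complex.I)‖
            + ‖Complex.exp ((θ : ℂ) * Complex.I)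
              - Complex.exp (((θm m : ℝ) : ℂ) * Complex.I)‖ := by
            rw [h1]; exact norm_add_le _ _
        _ ≤ t / 2 + π * t / 2 := add_le_add h2 h3
        _ = (1 + π) * t / 2 := by ring
    -- combine
    rw [hUHP]
    set X : ℝ := ‖ω - zm m‖ / (2 * Real.sqrt (ω.im * (zm m).im)) with hX
    clear_value X
    have hXle : X ≤ ((1 + π) * t / 2) / (2 * ((6/5 : ℝ) * t)) := by
      rw [hX]
      apply div_le_div₀ (by positivity) hN (by positivity)
      linarith
    have hsqrt2 : ((7/5 : ℝ) : ℝ) ≤ Real.sqrt 2 := by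
      rw [show ((7/5 : ℝ) : ℝ) = Real.sqrt ((7/5 : ℝ) ^ 2) by
        rw [Real.sqrt_sq]; norm_num]
      exact Real.sqrt_le_sqrt (by norm_num)
    have hXle2 : X ≤ Real.sqrt 2 / 4 * π := by
      have h4 : ((1 + π) * t / 2) / (2 * ((6/5 : ℝ) * t)) = (1 + π) / (24/5 : ℝ) := by
        field_simp
        ring
      rw [h4] at hXle
      have hπ3 := Real.pi_gt_three
      have hmul : (7/5 : ℝ) * π ≤ Real.sqrt 2 * π := mul_le_mul_of_nonneg_right hsqrt2 hπ.le
      linarith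
    have hX0 : 0 ≤ X := by rw [hX]; positivity
    calc 2 * Real.arsinh X ≤ 2 * X := by
          linarith [aux_arsinh_le_self hX0]
      _ ≤ 2 * (Real.sqrt 2 / 4 * π) := by linarith
      _ = Real.sqrt 2 / 2 * π := by ring
  exact ⟨fun ω hω => (key ω hω).1, fun ω hω => (key ω hω).2⟩
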